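/- For every integer n ≥ 2, the large rank of the Brandt semigroup B_n (the Brandt semigroup over the trivial group) is r₅(B_n) = n² − n + 3. -/

import Mathlib

/-- The Brandt semigroup `B(G, n)` over a group `G`: underlying set
`([n] × G × [n]) ∪ {0}`, encoded as `Option (Fin n × G × Fin n)` with `none`
playing the role of the zero element `0`. -/
def Brandt (G : Type*) (n : ℕ) : Type _ := Option (Fin n × G × Fin n)

namespace Brandt

/-- The zero element `0` of the Brandt semigroup. -/
def zero {G : Type*} {n : ℕ} : Brandt G n := none

/-- The element `(i, a, j)` of the Brandt semigroup. -/
def elem {G : Type*} {n : ℕ} (i : Fin n) (a : G) (j : Fin n) : Brandt G n := some (i, a, j)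

/-- Multiplication: `(i, a, j)(k, b, l) = (i, ab, l)` if `j = k` and `0` otherwise,
with `0` acting as a zero element. -/
def mul {G : Type*} [Group G] {n : ℕ} : Brandt G n → Brandt G n → Brandt G n
  | none, _ => none
  | some _, none => none
  | some (i, a, j), some (k, b, l) => if j = k then some (i, a * b, l) else none

instance (G : Type*) [Group G] (n : ℕ) : Semigroup (Brandt G n) where
  mul := mul
  mul_assoc x y z := by
    show mul (mul x y) z = mul x (mul y z)
    rcases x with _ | ⟨i, a, j⟩ <;> rcases y with _ | ⟨k, b, l⟩ <;> rcases z with _ | ⟨m, c, p⟩ <;>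
      simp only [mul] <;> (try rfl) <;> (try by_cases h1 : j = k) <;> (try by_cases h2 : l = m) <;>
      simp_all [mul_assoc] <;> rfl

instance (G : Type*) [Fintype G] (n : ℕ) : Fintype (Brandt G n) :=
  inferInstanceAs (Fintype (Option (Fin n × G × Fin n)))

instance (G : Type*) [DecidableEq G] (n : ℕ) : DecidableEq (Brandt G n) :=
  inferInstanceAs (DecidableEq (Option (Fin n × G × Fin n)))

end Brandt

section Aux

open Finset

variable {n : ℕ}

lemma brandt_mul_def {G : Type*} [Group G] (a b : Brandt G n) :
    a * b = Brandt.mul a b := rfl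

lemma brandt_elem_mul {G : Type*} [Group G] (i j k l : Fin n) (a b : G) :
    Brandt.elem i a j * Brandt.elem k b l =
      if j = k then Brandt.elem i (a * b) l else (Brandt.zero : Brandt G n) := by
  show Brandt.mul _ _ = _
  simp [Brandt.mul, Brandt.elem, Brandt.zero]

lemma brandt_card : Fintype.card (Brandt PUnit n) = n ^ 2 + 1 := by
  show Fintype.card (Option (Fin n × PUnit × Fin n)) = n ^ 2 + 1
  rw [Fintype.card_option, Fintype.card_prod, Fintype.card_prod, Fintype.card_fin,
    Fintype.card_punit]
  ring

lemma elem_injective_right (i : Fin n) :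
    Function.Injective (fun k : Fin n => Brandt.elem i PUnit.unit k) := by
  intro a b h
  have h' : (some (i, PUnit.unit, a) : Option (Fin n × PUnit × Fin n)) =
      some (i, PUnit.unit, b) := h
  simpa using h'

lemma elem_injective_left (j : Fin n) :
    Function.Injective (fun k : Fin n => Brandt.elem k PUnit.unit j) := by
  intro a b h
  have h' : (some (a, PUnit.unit, j) : Option (Fin n × PUnit × Fin n)) =
      some (b, PUnit.unit, j) := h
  simpa using h'

end Aux

/-- For `n ≥ 2`, the large rank of the Brandt semigroup `Bₙ = B(G, n)` over the
trivial group — the least `k` such that every subset of cardinality `k` generates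
`Bₙ` — equals `n² - n + 3`. -/
theorem largeRank_brandt_trivial_group (n : ℕ) (hn : 2 ≤ n) :
    IsLeast {k : ℕ | ∀ U : Finset (Brandt PUnit n), U.card = k →
        Subsemigroup.closure (U : Set (Brandt PUnit n)) = ⊤}
      (n ^ 2 - n + 3) := by
  have hnn : n ≤ n ^ 2 := by nlinarith
  obtain ⟨i0, i1, hi10⟩ : ∃ a b : Fin n, b ≠ a :=
    ⟨⟨0, by omega⟩, ⟨1, by omega⟩, fun h => by simpa using congrArg Fin.val h⟩
  constructor
  · -- every subset of size n² - n + 3 generates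
    intro U hU
    set S : Finset (Brandt PUnit n) := Finset.univ \ U with hSdef
    have hScard : S.card = n - 2 := by
      rw [hSdef, Finset.card_sdiff_of_subset (Finset.subset_univ U), Finset.card_univ, brandt_card, hU]
      omega
    have hmemS : ∀ x : Brandt PUnit n, x ∉ U → x ∈ S := by
      intro x hx; simp [hSdef, hx]
    have key : ∀ T : Finset (Brandt PUnit n), S.card < T.card → ∃ t ∈ T, t ∈ U := by
      intro T hT
      by_contra h
      push_neg at h
      have hsub : T ⊆ S := fun t ht => hmemS t (h t ht)
      exact absurd (Finset.card_le_card hsub) (by omega)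
    rw [eq_top_iff]
    rintro x -
    by_cases hx : x ∈ U
    · exact Subsemigroup.subset_closure hx
    have hxS : x ∈ S := hmemS x hx
    rcases x with _ | ⟨i, u, j⟩
    · -- x = 0 : find (ia,·,i0)·(kb,·,i0) with kb ≠ i0
      have h1 : S.card < (Finset.univ.image
          (fun i : Fin n => Brandt.elem i PUnit.unit i0)).card := by
        rw [Finset.card_image_of_injective _ (elem_injective_left i0), Finset.card_univ,
          Fintype.card_fin]
        omega
      obtain ⟨a, haT, haU⟩ := key _ h1
      obtain ⟨ia, -, rfl⟩ := Finset.mem_image.mp haT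
      have h2 : S.card < ((Finset.univ.erase i0).image
          (fun k : Fin n => Brandt.elem k PUnit.unit i0)).card := by
        rw [Finset.card_image_of_injective _ (elem_injective_left i0),
          Finset.card_erase_of_mem (Finset.mem_univ i0), Finset.card_univ, Fintype.card_fin]
        omega
      obtain ⟨b, hbT, hbU⟩ := key _ h2
      obtain ⟨kb, hkb, rfl⟩ := Finset.mem_image.mp hbT
      have hne : i0 ≠ kb := (Finset.ne_of_mem_erase hkb).symm
      have hmul : Brandt.elem ia PUnit.unit i0 * Brandt.elem kb PUnit.unit i0 =
          (none : Brandt PUnit n) := by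
        rw [brandt_elem_mul, if_neg hne]; rfl
      exact hmul ▸ mul_mem (Subsemigroup.subset_closure haU) (Subsemigroup.subset_closure hbU)
    · -- x = (i, u, j) ∈ S : find k with (i,·,k), (k,·,j) ∈ U
      obtain rfl : u = PUnit.unit := rfl
      classical
      set set1 : Finset (Fin n) :=
        Finset.univ.filter (fun k => Brandt.elem i PUnit.unit k ∈ S) with hset1
      set set2 : Finset (Fin n) :=
        Finset.univ.filter (fun k => Brandt.elem k PUnit.unit j ∈ S) with hset2
      set A : Finset (Brandt PUnit n) :=
        set1.image (fun k => Brandt.elem i PUnit.unit k) with hA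
      set B : Finset (Brandt PUnit n) :=
        set2.image (fun k => Brandt.elem k PUnit.unit j) with hB
      have hAcard : A.card = set1.card := Finset.card_image_of_injective _ (elem_injective_right i)
      have hBcard : B.card = set2.card := Finset.card_image_of_injective _ (elem_injective_left j)
      have hAS : A ⊆ S := by
        intro y hy
        obtain ⟨k, hk, rfl⟩ := Finset.mem_image.mp hy
        exact (Finset.mem_filter.mp hk).2
      have hBS : B ⊆ S := by
        intro y hy
        obtain ⟨k, hk, rfl⟩ := Finset.mem_image.mp hy
        exact (Finset.mem_filter.mp hk).2
      have hxmem : (Brandt.elem i PUnit.unit j : Brandt PUnit n) ∈ S := hxS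
      have hxA : (Brandt.elem i PUnit.unit j : Brandt PUnit n) ∈ A := by
        apply Finset.mem_image.mpr
        exact ⟨j, Finset.mem_filter.mpr ⟨Finset.mem_univ _, hxmem⟩, rfl⟩
      have hxB : (Brandt.elem i PUnit.unit j : Brandt PUnit n) ∈ B := by
        apply Finset.mem_image.mpr
        exact ⟨i, Finset.mem_filter.mpr ⟨Finset.mem_univ _, hxmem⟩, rfl⟩
      have hABsub : A ∩ B ⊆ {Brandt.elem i PUnit.unit j} := by
        intro y hy
        rw [Finset.mem_inter] at hy
        obtain ⟨k, -, rfl⟩ := Finset.mem_image.mp hy.1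
        obtain ⟨k', -, he⟩ := Finset.mem_image.mp hy.2
        have hjk : j = k := by
          have h' : (some (k', PUnit.unit, j) : Option (Fin n × PUnit × Fin n)) =
              some (i, PUnit.unit, k) := he
          simp only [Option.some.injEq, Prod.mk.injEq] at h'
          tauto
        rw [← hjk]
        exact Finset.mem_singleton_self _
      have hABcard : (A ∩ B).card = 1 := by
        refine le_antisymm ?_ ?_
        · simpa using Finset.card_le_card hABsub
        · exact Finset.card_pos.mpr ⟨_, Finset.mem_inter.mpr ⟨hxA, hxB⟩⟩
      have hunion : (A ∪ B).card ≤ n - 2 :=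
        hScard ▸ Finset.card_le_card (Finset.union_subset hAS hBS)
      have hsum : set1.card + set2.card ≤ n - 1 := by
        have := Finset.card_union_add_card_inter A B
        omega
      have hlt : (set1 ∪ set2).card < n := by
        have := Finset.card_union_le set1 set2
        omega
      have hex : ∃ k : Fin n, k ∉ set1 ∪ set2 := by
        by_contra h
        push_neg at h
        have hsub : (Finset.univ : Finset (Fin n)) ⊆ set1 ∪ set2 := fun k _ => h k
        have := Finset.card_le_card hsub
        rw [Finset.card_univ, Fintype.card_fin] at this
        omega
      obtain ⟨k, hk⟩ := hex
      rw [Finset.mem_union, not_or] at hk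
      have hk1 : Brandt.elem i PUnit.unit k ∈ U := by
        by_contra h
        exact hk.1 (Finset.mem_filter.mpr ⟨Finset.mem_univ _, hmemS _ h⟩)
      have hk2 : Brandt.elem k PUnit.unit j ∈ U := by
        by_contra h
        exact hk.2 (Finset.mem_filter.mpr ⟨Finset.mem_univ _, hmemS _ h⟩)
      have hmul : Brandt.elem i PUnit.unit k * Brandt.elem k PUnit.unit j =
          (Brandt.elem i PUnit.unit j : Brandt PUnit n) := by
        rw [brandt_elem_mul, if_pos rfl]
      show Brandt.elem i PUnit.unit j ∈ Subsemigroup.closure (U : Set (Brandt PUnit n))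
      rw [← hmul]
      exact mul_mem (Subsemigroup.subset_closure hk1) (Subsemigroup.subset_closure hk2)
  · -- lower bound
    intro k hk
    by_contra hlt
    push_neg at hlt
    classical
    -- the subsemigroup avoiding the elements (i0, ·, j) for j ≠ i0
    have Wmul : ∀ a b : Brandt PUnit n,
        (∀ j : Fin n, j ≠ i0 → a ≠ Brandt.elem i0 PUnit.unit j) →
        (∀ j : Fin n, j ≠ i0 → b ≠ Brandt.elem i0 PUnit.unit j) →
        (∀ j : Fin n, j ≠ i0 → a * b ≠ Brandt.elem i0 PUnit.unit j) := by
      rintro (_ | ⟨p, ⟨⟩, q⟩) (_ | ⟨r, ⟨⟩, s⟩) ha hb j hj hab <;>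
        change Brandt.mul _ _ = _ at hab <;> simp only [Brandt.mul, Brandt.elem] at hab
      · simp at hab
      · simp at hab
      · simp at hab
      · split_ifs at hab with hqr
        · change (if q = r then (some (p, PUnit.unit * PUnit.unit, s) : Option (Fin n × PUnit × Fin n))
            else none) = some (i0, PUnit.unit, j) at hab
          rw [if_pos hqr] at hab
          injection hab with h1
          rw [Prod.mk.injEq, Prod.mk.injEq] at h1
          obtain ⟨hp, -, hs⟩ := h1
          by_cases hq : q = i0
          · refine hb j hj ?_
            show some (r, PUnit.unit, s) = some (i0, PUnit.unit, j)
            rw [← hqr, hq, hs]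
          · refine ha q hq ?_
            show some (p, PUnit.unit, q) = some (i0, PUnit.unit, q)
            rw [hp]
        · simp [hqr] at hab
    set W : Subsemigroup (Brandt PUnit n) :=
      { carrier := {x | ∀ j : Fin n, j ≠ i0 → x ≠ Brandt.elem i0 PUnit.unit j}
        mul_mem' := fun {a b} ha hb => Wmul a b ha hb } with hW
    set Wf : Finset (Brandt PUnit n) :=
      Finset.univ.filter (fun x => x ∈ W) with hWf
    have hcompl : Finset.univ \ Wf =
        (Finset.univ.erase i0).image (fun j => Brandt.elem i0 PUnit.unit j) := by
      ext x
      constructor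
      · intro hx
        have hx' : x ∉ Wf := (Finset.mem_sdiff.mp hx).2
        have hnot : ¬ (∀ j : Fin n, j ≠ i0 → x ≠ Brandt.elem i0 PUnit.unit j) := by
          intro h
          exact hx' (Finset.mem_filter.mpr ⟨Finset.mem_univ x, h⟩)
        push_neg at hnot
        obtain ⟨j, hj, rfl⟩ := hnot
        exact Finset.mem_image.mpr ⟨j, Finset.mem_erase.mpr ⟨hj, Finset.mem_univ j⟩, rfl⟩
      · intro hx
        obtain ⟨j, hj, rfl⟩ := Finset.mem_image.mp hx
        refine Finset.mem_sdiff.mpr ⟨Finset.mem_univ _, ?_⟩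
        intro hW'
        exact (Finset.mem_filter.mp hW').2 j (Finset.mem_erase.mp hj).1 rfl
    have hWfcard : Wf.card = n ^ 2 + 1 - (n - 1) := by
      have h1 : (Finset.univ \ Wf).card = n - 1 := by
        rw [hcompl, Finset.card_image_of_injective _ (elem_injective_right i0),
          Finset.card_erase_of_mem (Finset.mem_univ i0), Finset.card_univ, Fintype.card_fin]
      have h2 := Finset.card_sdiff_add_card_eq_card (Finset.subset_univ Wf)
      rw [Finset.card_univ, brandt_card] at h2
      omega
    have hkW : k ≤ Wf.card := by omega
    obtain ⟨U, hUW, hUcard⟩ := Finset.exists_subset_card_eq hkW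
    have htop := hk U hUcard
    have hle : Subsemigroup.closure (U : Set (Brandt PUnit n)) ≤ W := by
      apply Subsemigroup.closure_le.mpr
      intro x hx
      have hxW := hUW hx
      rw [hWf, Finset.mem_filter] at hxW
      exact hxW.2
    have hmem : (Brandt.elem i0 PUnit.unit i1 : Brandt PUnit n) ∈ W := by
      apply hle
      rw [htop]
      trivial
    exact hmem i1 hi10 rfl
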